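/- arXiv:1909.12461 — 2 statements merged into one kernel-verified Lean document; each statement's English description precedes it below -/
import Mathlib

section
/- Let V be a finite-dimensional real vector space with symmetric positive definite bilinear forms a and s, and let W ⊆ V be a subspace with φ ∈ W. Then ψ ∈ V and μ ∈ W solve the saddle-point system a(ψ, v) + s(v, μ) = 0 for all v ∈ V and s(ψ − φ, ν) = 0 for all ν ∈ W if and only if ψ minimizes a(ψ', ψ') over all ψ' ∈ V satisfying s(ψ', ν) = s(φ, ν) for all ν ∈ W. Moreover such a solution (ψ, μ) exists. -/
open LinearMap (BilinForm)

lemma aux_nonneg {V : Type*} [AddCommGroup V] [Module ℝ V] (b : BilinForm ℝ V)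
    (hpd : ∀ v : V, v ≠ 0 → 0 < b v v) (v : V) : 0 ≤ b v v := by
  rcases eq_or_ne v 0 with rfl | h
  · simp
  · exact (hpd v h).le

lemma aux_eq_zero {V : Type*} [AddCommGroup V] [Module ℝ V] (b : BilinForm ℝ V)
    (hpd : ∀ v : V, v ≠ 0 → 0 < b v v) {v : V} (h : b v v = 0) : v = 0 := by
  by_contra hv
  exact absurd h (ne_of_gt (hpd v hv))

lemma aux_restrict_nondeg {V : Type*} [AddCommGroup V] [Module ℝ V] (b : BilinForm ℝ V)
    (hpd : ∀ v : V, v ≠ 0 → 0 < b v v) (U : Submodule ℝ V) :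
    (b.restrict U).Nondegenerate := by
  constructor
  all_goals
    rintro ⟨x, hx⟩ h
    have := h ⟨x, hx⟩
    simp only [LinearMap.BilinForm.restrict_apply] at this
    exact Subtype.ext (aux_eq_zero b hpd this)

lemma aux_proj {V : Type*} [AddCommGroup V] [Module ℝ V] [FiniteDimensional ℝ V]
    (b : BilinForm ℝ V) (hsym : ∀ x y : V, b x y = b y x)
    (hpd : ∀ v : V, v ≠ 0 → 0 < b v v) (U : Submodule ℝ V) (v : V) :
    ∃ w ∈ U, ∀ u ∈ U, b (v - w) u = 0 := by
  have hrefl : b.IsRefl := fun x y h => by rw [hsym]; exact h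
  have hcompl := b.isCompl_orthogonal_of_restrict_nondegenerate hrefl
    (aux_restrict_nondeg b hpd U)
  have htop : U ⊔ b.orthogonal U = ⊤ := hcompl.sup_eq_top
  have hv : v ∈ U ⊔ b.orthogonal U := htop ▸ Submodule.mem_top
  obtain ⟨w, hw, k, hk, hwk⟩ := Submodule.mem_sup.1 hv
  refine ⟨w, hw, fun u hu => ?_⟩
  have : v - w = k := by rw [← hwk]; abel
  rw [this, hsym]
  exact (LinearMap.BilinForm.mem_orthogonal_iff.1 hk) u hu

/-- equivalence of the saddle-point (Lagrange multiplier) system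
and the constrained energy minimization problem, together with existence. -/
theorem saddle_point_equiv_minimization {V : Type*} [AddCommGroup V] [Module ℝ V]
    [FiniteDimensional ℝ V]
    (a s : LinearMap.BilinForm ℝ V)
    (hasym : ∀ x y : V, a x y = a y x)
    (hapd : ∀ v : V, v ≠ 0 → 0 < a v v)
    (hssym : ∀ x y : V, s x y = s y x)
    (hspd : ∀ v : V, v ≠ 0 → 0 < s v v)
    (W : Submodule ℝ V) (φ : V) (hφ : φ ∈ W) :
    (∀ ψ : V,
      (∃ μ ∈ W, (∀ v : V, a ψ v + s v μ = 0) ∧ (∀ ν ∈ W, s (ψ - φ) ν = 0)) ↔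
      ((∀ ν ∈ W, s ψ ν = s φ ν) ∧
        ∀ ψ' : V, (∀ ν ∈ W, s ψ' ν = s φ ν) → a ψ ψ ≤ a ψ' ψ')) ∧
    (∃ ψ : V, ∃ μ ∈ W,
      (∀ v : V, a ψ v + s v μ = 0) ∧ (∀ ν ∈ W, s (ψ - φ) ν = 0)) := by
  -- expansion identity
  have hexp : ∀ ψ w : V, a (ψ + w) (ψ + w) = a ψ ψ + 2 * a ψ w + a w w := by
    intro ψ w
    have h1 : a (ψ + w) (ψ + w) = a ψ ψ + a ψ w + a w ψ + a w w := by
      simp [map_add, LinearMap.add_apply]; ring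
    rw [h1, hasym w ψ]; ring
  -- key: minimality implies a ψ w = 0 for w in s-orthogonal of W
  have hmin_orth : ∀ ψ : V, (∀ ν ∈ W, s ψ ν = s φ ν) →
      (∀ ψ' : V, (∀ ν ∈ W, s ψ' ν = s φ ν) → a ψ ψ ≤ a ψ' ψ') →
      ∀ w : V, (∀ ν ∈ W, s w ν = 0) → a ψ w = 0 := by
    intro ψ hfeas hmin w hw
    rcases eq_or_ne w 0 with rfl | hw0
    · simp
    have haw : 0 < a w w := hapd w hw0
    have key : ∀ t : ℝ, 0 ≤ 2 * t * a ψ w + t ^ 2 * a w w := by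
      intro t
      have hfeas' : ∀ ν ∈ W, s (ψ + t • w) ν = s φ ν := by
        intro ν hν
        simp [map_add, LinearMap.add_apply, LinearMap.map_smul, hw ν hν, hfeas ν hν]
      have := hmin (ψ + t • w) hfeas'
      have hexp' : a (ψ + t • w) (ψ + t • w) = a ψ ψ + 2 * t * a ψ w + t ^ 2 * a w w := by
        rw [hexp]
        simp [LinearMap.map_smul, LinearMap.smul_apply]
        ring
      rw [hexp'] at this
      linarith
    have := key (-(a ψ w) / (a w w))
    have h2 : 2 * (-(a ψ w) / a w w) * a ψ w + (-(a ψ w) / a w w) ^ 2 * a w w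
        = -(a ψ w) ^ 2 / a w w := by
      field_simp; ring
    rw [h2] at this
    have : (a ψ w) ^ 2 ≤ 0 := by
      rw [div_nonneg_iff] at this
      rcases this with ⟨h1, _⟩ | ⟨h1, h2'⟩
      · nlinarith
      · nlinarith
    nlinarith [sq_nonneg (a ψ w)]
  constructor
  · intro ψ
    constructor
    · rintro ⟨μ, hμ, heq1, heq2⟩
      have hfeas : ∀ ν ∈ W, s ψ ν = s φ ν := by
        intro ν hν
        have := heq2 ν hν
        simp only [map_sub, LinearMap.sub_apply] at this
        linarith
      refine ⟨hfeas, fun ψ' hψ' => ?_⟩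
      set w := ψ' - ψ with hwdef
      have hworth : ∀ ν ∈ W, s w ν = 0 := by
        intro ν hν
        simp only [hwdef, map_sub, LinearMap.sub_apply]
        rw [hψ' ν hν, hfeas ν hν]; ring
      have haw : a ψ w = 0 := by
        have h1 := heq1 w
        have h2 : s w μ = 0 := hworth μ hμ
        linarith
      have : ψ' = ψ + w := by rw [hwdef]; abel
      rw [this, hexp, haw]
      have := aux_nonneg a hapd w
      linarith
    · rintro ⟨hfeas, hmin⟩
      have horth := hmin_orth ψ hfeas hmin
      -- Riesz representation via s
      have hsnd : s.Nondegenerate := by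
        exact ⟨fun m hm => aux_eq_zero s hspd (hm m), fun m hm => aux_eq_zero s hspd (hm m)⟩
      set z := (s.toDual hsnd).symm (a ψ) with hz
      have hzrep : ∀ v : V, s z v = a ψ v := fun v =>
        LinearMap.BilinForm.apply_toDual_symm_apply (a ψ) v
      -- z is s-orthogonal to the orthogonal complement of W, hence z ∈ W... project
      obtain ⟨w₀, hw₀, hw₀orth⟩ := aux_proj s hssym hspd W z
      have hzw : z = w₀ := by
        have h1 : ∀ ν ∈ W, s (z - w₀) ν = 0 := hw₀orth
        have h2 : a ψ (z - w₀) = 0 := horth (z - w₀) h1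
        have h3 : s z (z - w₀) = 0 := by rw [hzrep]; exact h2
        have h4 : s w₀ (z - w₀) = 0 := by
          rw [hssym]; exact h1 w₀ hw₀
        have h5 : s (z - w₀) (z - w₀) = 0 := by
          simp only [map_sub, LinearMap.sub_apply]
          rw [hssym z (z-w₀)] at h3
          rw [hssym w₀ (z - w₀)] at h4
          simp only [map_sub, LinearMap.sub_apply] at h3 h4 ⊢
          linarith
        have := aux_eq_zero s hspd h5
        rw [sub_eq_zero] at this
        exact this
      refine ⟨-z, hzw ▸ neg_mem hw₀, fun v => ?_, fun ν hν => ?_⟩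
      · have := hzrep v
        rw [hssym z v] at this
        rw [map_neg]
        linarith
      · simp only [map_sub, LinearMap.sub_apply]
        rw [hfeas ν hν]; ring
  · -- existence
    obtain ⟨k₀, hk₀, hk₀orth⟩ := aux_proj a hasym hapd (s.orthogonal W) φ
    set ψ := φ - k₀ with hψ
    have hfeas : ∀ ν ∈ W, s ψ ν = s φ ν := by
      intro ν hν
      have hk : s k₀ ν = 0 := by
        rw [hssym]
        exact (LinearMap.BilinForm.mem_orthogonal_iff.1 hk₀) ν hν
      simp only [hψ, map_sub, LinearMap.sub_apply, hk]
      ring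
    have hmin : ∀ ψ' : V, (∀ ν ∈ W, s ψ' ν = s φ ν) → a ψ ψ ≤ a ψ' ψ' := by
      intro ψ' hψ'
      set w := ψ' - ψ with hwdef
      have hwK : w ∈ s.orthogonal W := by
        rw [LinearMap.BilinForm.mem_orthogonal_iff]
        intro ν hν
        rw [hssym]
        simp only [hwdef, map_sub, LinearMap.sub_apply]
        rw [hψ' ν hν, hfeas ν hν]; ring
      have haw : a ψ w = 0 := hk₀orth w hwK
      have : ψ' = ψ + w := by rw [hwdef]; abel
      rw [this, hexp, haw]
      have := aux_nonneg a hapd w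
      linarith
    -- use backward direction logic: just redo Riesz (reuse via the iff would need the first part)
    -- Instead, note the first bullet is already proven; but structurally we can't refer to it.
    -- Redo: use hmin_orth etc.
    have horth := hmin_orth ψ hfeas hmin
    have hsnd : s.Nondegenerate :=
      ⟨fun m hm => aux_eq_zero s hspd (hm m), fun m hm => aux_eq_zero s hspd (hm m)⟩
    set z := (s.toDual hsnd).symm (a ψ) with hz
    have hzrep : ∀ v : V, s z v = a ψ v := fun v =>
      LinearMap.BilinForm.apply_toDual_symm_apply (a ψ) v
    obtain ⟨w₀, hw₀, hw₀orth⟩ := aux_proj s hssym hspd W z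
    have hzw : z = w₀ := by
      have h1 : ∀ ν ∈ W, s (z - w₀) ν = 0 := hw₀orth
      have h2 : a ψ (z - w₀) = 0 := horth (z - w₀) h1
      have h3 : s z (z - w₀) = 0 := by rw [hzrep]; exact h2
      have h4 : s w₀ (z - w₀) = 0 := by rw [hssym]; exact h1 w₀ hw₀
      have h5 : s (z - w₀) (z - w₀) = 0 := by
        rw [hssym z (z-w₀)] at h3
        rw [hssym w₀ (z - w₀)] at h4
        simp only [map_sub, LinearMap.sub_apply] at h3 h4 ⊢
        linarith
      have := aux_eq_zero s hspd h5
      rw [sub_eq_zero] at this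
      exact this
    refine ⟨ψ, -z, hzw ▸ neg_mem hw₀, fun v => ?_, fun ν hν => ?_⟩
    · have := hzrep v
      rw [hssym z v] at this
      rw [map_neg]
      linarith
    · simp only [map_sub, LinearMap.sub_apply]
      rw [hfeas ν hν]; ring
end

section
/- Let a and s be symmetric bilinear forms on a real vector space V with a an inner product, and suppose the inf-sup condition holds: for every ν in a finite-dimensional subspace W ⊆ V, sup over w ∈ V, w ≠ 0 of s(w, ν)/√(a(w, w)) ≥ β √(s(ν, ν)) with β > 0. Then for every φ ∈ W the constrained minimization problem min{a(ψ, ψ) : ψ ∈ V, s(ψ, ν) = s(φ, ν) for all ν ∈ W} has a solution. -/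
open scoped RealInnerProductSpace

/-- the inf-sup condition implies solvability of the constrained
energy minimization problem. -/
theorem infsup_implies_minimizer_exists {V : Type*} [NormedAddCommGroup V]
    [InnerProductSpace ℝ V] [CompleteSpace V]
    (s : LinearMap.BilinForm ℝ V)
    (hssym : ∀ x y : V, s x y = s y x)
    (hspsd : ∀ v : V, 0 ≤ s v v)
    (W : Submodule ℝ V) [FiniteDimensional ℝ W]
    (hspdW : ∀ v ∈ W, v ≠ 0 → 0 < s v v)
    (β : ℝ) (hβ : 0 < β)
    (hinfsup : ∀ ν ∈ W,
      β * Real.sqrt (s ν ν) ≤ ⨆ w : {w : V // w ≠ 0}, s w ν / Real.sqrt ⟪(w : V), (w : V)⟫) :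
    ∀ φ ∈ W, ∃ ψ : V,
      (∀ ν ∈ W, s ψ ν = s φ ν) ∧
      ∀ ψ' : V, (∀ ν ∈ W, s ψ' ν = s φ ν) → ⟪ψ, ψ⟫ ≤ ⟪ψ', ψ'⟫ := by
  intro φ hφ
  -- Step 1: each functional w ↦ s w ν (ν ∈ W) is continuous
  have hcont : ∀ ν ∈ W, Continuous fun w : V => s w ν := by
    intro ν hν
    by_cases hν0 : ν = 0
    · subst hν0; simpa using continuous_const
    · have hpos : 0 < β * Real.sqrt (s ν ν) := by
        have h := hspdW ν hν hν0
        have := Real.sqrt_pos.mpr h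
        positivity
      have hsup := hinfsup ν hν
      have hbdd : BddAbove (Set.range fun w : {w : V // w ≠ 0} =>
          s w ν / Real.sqrt ⟪(w : V), (w : V)⟫) := by
        by_contra h
        rw [Real.iSup_of_not_bddAbove h] at hsup
        linarith
      obtain ⟨C, hC⟩ := hbdd
      have key : ∀ w : V, w ≠ 0 → s w ν ≤ C * ‖w‖ := by
        intro w hw
        have h1 : s w ν / Real.sqrt ⟪(w : V), (w : V)⟫ ≤ C :=
          hC (Set.mem_range_self (⟨w, hw⟩ : {w : V // w ≠ 0}))
        have hsq : Real.sqrt ⟪(w : V), (w : V)⟫ = ‖w‖ := by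
          rw [real_inner_self_eq_norm_sq, Real.sqrt_sq (norm_nonneg w)]
        rw [hsq] at h1
        have hwpos : (0:ℝ) < ‖w‖ := norm_pos_iff.mpr hw
        calc s w ν = (s w ν / ‖w‖) * ‖w‖ := by field_simp
          _ ≤ C * ‖w‖ := by
            exact mul_le_mul_of_nonneg_right h1 (le_of_lt hwpos)
      have hbound : ∀ w : V, ‖(s.flip ν) w‖ ≤ (max C 0) * ‖w‖ := by
        intro w
        by_cases hw : w = 0
        · subst hw; simp
        · have h1 := key w hw
          have h2 := key (-w) (neg_ne_zero.mpr hw)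
          rw [map_neg, LinearMap.neg_apply, norm_neg] at h2
          have h2' : -(C * ‖w‖) ≤ s w ν := by linarith
          have habs : |s w ν| ≤ C * ‖w‖ := abs_le.mpr ⟨h2', h1⟩
          have : C * ‖w‖ ≤ max C 0 * ‖w‖ :=
            mul_le_mul_of_nonneg_right (le_max_left C 0) (norm_nonneg w)
          calc ‖(s.flip ν) w‖ = |s w ν| := rfl
            _ ≤ max C 0 * ‖w‖ := le_trans habs this
      exact ((s.flip ν).mkContinuous (max C 0) hbound).continuous
  -- Step 2: the homogeneous constraint set is a closed submodule
  set K : Submodule ℝ V :=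
    { carrier := {ψ : V | ∀ ν ∈ W, s ψ ν = 0}
      add_mem' := by
        intro a b ha hb ν hν
        rw [map_add, LinearMap.add_apply, ha ν hν, hb ν hν, add_zero]
      zero_mem' := by intro ν hν; simp
      smul_mem' := by
        intro c a ha ν hν
        rw [map_smul, LinearMap.smul_apply, ha ν hν, smul_zero] } with hK
  have hKmem : ∀ x : V, x ∈ K ↔ ∀ ν ∈ W, s x ν = 0 := fun x => Iff.rfl
  have hKclosed : IsClosed (K : Set V) := by
    have heq : (K : Set V) = ⋂ ν ∈ W, {ψ : V | s ψ ν = 0} := by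
      ext ψ
      simp only [Set.mem_iInter, Set.mem_setOf_eq]
      exact hKmem ψ
    rw [heq]
    exact isClosed_biInter fun ν hν => isClosed_eq (hcont ν hν) continuous_const
  haveI : CompleteSpace K := hKclosed.completeSpace_coe
  set p : V := (K.orthogonalProjectionOnto φ : V) with hp
  have hpK : p ∈ K := (K.orthogonalProjectionOnto φ).2
  have horth : φ - p ∈ Kᗮ := Submodule.sub_starProjection_mem_orthogonal (K := K) φ
  refine ⟨φ - p, ?_, ?_⟩
  · intro ν hν
    rw [map_sub, LinearMap.sub_apply, hpK ν hν, sub_zero]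
  · intro ψ' hψ'
    set u : V := φ - p with hu
    have hd : ψ' - u ∈ K := by
      intro ν hν
      rw [map_sub, LinearMap.sub_apply, hψ' ν hν, map_sub, LinearMap.sub_apply,
        hpK ν hν, sub_zero, sub_self]
    have hinner : ⟪u, ψ' - u⟫ = 0 := by
      have := horth (ψ' - u) hd
      rwa [real_inner_comm] at this
    have hexp : ⟪ψ', ψ'⟫ = ⟪u, u⟫ + 2 * ⟪u, ψ' - u⟫ + ⟪ψ' - u, ψ' - u⟫ := by
      have h := real_inner_add_add_self u (ψ' - u)
      have heq : u + (ψ' - u) = ψ' := by abel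
      rw [heq] at h
      exact h
    have hnn : (0:ℝ) ≤ ⟪ψ' - u, ψ' - u⟫ := real_inner_self_nonneg
    rw [hexp, hinner]
    linarith
end
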